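/- For every positive integer $D$: $\rho_0(D)=\prod_{p\mid D} p^{\lfloor v_p(D)/2\rfloor}$, and for every integer $k\ge 1$: $\rho_k(D)=\prod_{p\mid D,\ v_p(k)<v_p(D)/2}\big(2\,p^{v_p(k)}\big)\cdot\prod_{p\mid D,\ v_p(k)\ge v_p(D)/2} p^{\lfloor v_p(D)/2\rfloor}$, where the products run over the prime divisors $p$ of $D$. In particular, if $D$ is squarefree then $\rho_0(D)=1$. -/

import Mathlib

open Finset
open scoped Classical

/-- `ρ_k(D) = #{1 ≤ y ≤ D : D ∣ y² + k y}`. -/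
def rhok (k D : ℕ) : ℕ := ((Finset.Icc 1 D).filter (fun y => D ∣ y ^ 2 + k * y)).card

/-- Counting multiples of `c` in `[1, N]`. -/
lemma count_dvd (c N : ℕ) : ((Finset.Icc 1 N).filter (fun y => c ∣ y)).card = N / c := by
  rw [show Finset.Icc 1 N = Finset.Ioc 0 N from by rw [← Finset.Icc_add_one_left_eq_Ioc, zero_add]]
  exact Nat.Ioc_filter_dvd_card_eq_div N c

/-- Counting `y` in `[1, N]` with `c ∣ y + r`, when `c ∣ N`. -/
lemma count_dvd_shift (c N r : ℕ) (hc : 0 < c) (hcd : c ∣ N) :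
    ((Finset.Icc 1 N).filter (fun y => c ∣ y + r)).card = N / c := by
  have h1 : ((Finset.Icc 1 N).filter (fun y => c ∣ y + r)).card
      = ((Finset.Ioc r (N + r)).filter (fun z => c ∣ z)).card := by
    apply Finset.card_bij (fun y _ => y + r)
    · intro y hy
      simp only [Finset.mem_filter, Finset.mem_Icc] at hy
      simp only [Finset.mem_filter, Finset.mem_Ioc]
      exact ⟨⟨by omega, by omega⟩, hy.2⟩
    · intro y1 h1 y2 h2 h; omega
    · intro z hz
      simp only [Finset.mem_filter, Finset.mem_Ioc] at hz
      refine ⟨z - r, ?_, by omega⟩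
      simp only [Finset.mem_filter, Finset.mem_Icc]
      have : z - r + r = z := by omega
      exact ⟨⟨by omega, by omega⟩, by rw [this]; exact hz.2⟩
  have h2 : ((Finset.Ioc 0 (N + r)).filter (fun z => c ∣ z)).card
      = ((Finset.Ioc 0 r).filter (fun z => c ∣ z)).card
        + ((Finset.Ioc r (N + r)).filter (fun z => c ∣ z)).card := by
    rw [← Finset.card_union_of_disjoint, ← Finset.filter_union,
      Finset.Ioc_union_Ioc_eq_Ioc (Nat.zero_le r) (Nat.le_add_left r N)]
    apply Finset.disjoint_filter_filter
    rw [Finset.disjoint_left]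
    intro a ha hb
    simp only [Finset.mem_Ioc] at ha hb
    omega
  rw [Nat.Ioc_filter_dvd_card_eq_div, Nat.Ioc_filter_dvd_card_eq_div] at h2
  obtain ⟨q, rfl⟩ := hcd
  rw [Nat.mul_add_div hc] at h2
  rw [h1, Nat.mul_div_cancel_left q hc]
  omega

/-- The divisibility condition at a prime power, `k = 0` case. -/
lemma cond_zero (p e y : ℕ) (hp : p.Prime) (hy : 0 < y) :
    p ^ e ∣ y ^ 2 + 0 * y ↔ p ^ (e - e / 2) ∣ y := by
  have hy2 : y ^ 2 ≠ 0 := by positivity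
  rw [zero_mul, add_zero, Nat.Prime.pow_dvd_iff_le_factorization hp hy2,
    Nat.Prime.pow_dvd_iff_le_factorization hp hy.ne']
  rw [Nat.factorization_pow]
  simp only [Finsupp.smul_apply, smul_eq_mul]
  omega

/-- The divisibility condition at a prime power, `2 v_p(k) < e` case. -/
lemma cond_small (p e k y : ℕ) (hp : p.Prime) (hy : 0 < y) (hk : 0 < k)
    (h2a : 2 * k.factorization p < e) :
    p ^ e ∣ y ^ 2 + k * y ↔
      (p ^ (e - k.factorization p) ∣ y ∨ p ^ (e - k.factorization p) ∣ y + k) := by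
  set a := k.factorization p with ha
  have hyk : y + k ≠ 0 := by omega
  have hprod : y ^ 2 + k * y = y * (y + k) := by ring
  have hpk : p ^ a ∣ k := Nat.ordProj_dvd k p
  constructor
  · intro h
    rw [hprod] at h
    have hmul : (y * (y + k)).factorization p
        = y.factorization p + (y + k).factorization p := by
      rw [Nat.factorization_mul hy.ne' hyk]; rfl
    have he' : e ≤ y.factorization p + (y + k).factorization p := by
      rw [← hmul]
      exact (Nat.Prime.pow_dvd_iff_le_factorization hp (by positivity)).mp h
    set v := y.factorization p with hv
    set w := (y + k).factorization p with hw
    by_cases hcase : e - a ≤ v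
    · exact Or.inl ((Nat.Prime.pow_dvd_iff_le_factorization hp hy.ne').mpr hcase)
    · right
      have hwa : a + 1 ≤ w := by omega
      have h1 : p ^ (a + 1) ∣ y + k :=
        (Nat.Prime.pow_dvd_iff_le_factorization hp hyk).mpr hwa
      have h2 : ¬ p ^ (a + 1) ∣ k := Nat.pow_succ_factorization_not_dvd hk.ne' hp
      have h3 : ¬ p ^ (a + 1) ∣ y := by
        intro hd
        apply h2
        have := Nat.dvd_sub h1 hd
        simpa using this
      have hva : v ≤ a := by
        by_contra hcon
        exact h3 ((Nat.Prime.pow_dvd_iff_le_factorization hp hy.ne').mpr (by omega))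
      have : e - a ≤ w := by omega
      exact (Nat.Prime.pow_dvd_iff_le_factorization hp hyk).mpr this
  · intro h
    rcases h with h | h
    · apply dvd_add
      · have h2 : p ^ (2 * (e - a)) ∣ y ^ 2 := by
          rw [two_mul, pow_add, sq]
          exact mul_dvd_mul h h
        exact dvd_trans (pow_dvd_pow p (by omega)) h2
      · have : p ^ (a + (e - a)) ∣ k * y := by
          rw [pow_add]; exact mul_dvd_mul hpk h
        exact dvd_trans (pow_dvd_pow p (by omega)) this
    · rw [hprod]
      have hay : p ^ a ∣ y := by
        have h1 : p ^ a ∣ y + k := dvd_trans (pow_dvd_pow p (by omega)) h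
        have := Nat.dvd_sub h1 hpk
        simpa using this
      have : p ^ (a + (e - a)) ∣ y * (y + k) := by
        rw [pow_add]; exact mul_dvd_mul hay h
      exact dvd_trans (pow_dvd_pow p (by omega)) this

/-- The divisibility condition at a prime power, `e ≤ 2 v_p(k)` case. -/
lemma cond_big (p e k y : ℕ) (hp : p.Prime) (hy : 0 < y) (hk : 0 < k)
    (h2a : e ≤ 2 * k.factorization p) :
    p ^ e ∣ y ^ 2 + k * y ↔ p ^ (e - e / 2) ∣ y := by
  set a := k.factorization p with ha
  set m := e - e / 2 with hm
  have hyk : y + k ≠ 0 := by omega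
  have hprod : y ^ 2 + k * y = y * (y + k) := by ring
  have hma : m ≤ a := by omega
  constructor
  · intro h
    rw [hprod] at h
    have hmul : (y * (y + k)).factorization p
        = y.factorization p + (y + k).factorization p := by
      rw [Nat.factorization_mul hy.ne' hyk]; rfl
    have he' : e ≤ y.factorization p + (y + k).factorization p := by
      rw [← hmul]
      exact (Nat.Prime.pow_dvd_iff_le_factorization hp (by positivity)).mp h
    set v := y.factorization p with hv
    set w := (y + k).factorization p with hw
    apply (Nat.Prime.pow_dvd_iff_le_factorization hp hy.ne').mpr
    by_contra hcon
    have hvm : v < m := by omega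
    have h1 : p ^ (v + 1) ∣ k :=
      dvd_trans (pow_dvd_pow p (by omega)) (Nat.ordProj_dvd k p)
    have h2 : ¬ p ^ (v + 1) ∣ y := Nat.pow_succ_factorization_not_dvd hy.ne' hp
    have h3 : ¬ p ^ (v + 1) ∣ y + k := by
      intro hd
      apply h2
      have := Nat.dvd_sub hd h1
      simpa using this
    have hwv : w ≤ v := by
      by_contra hcon2
      exact h3 ((Nat.Prime.pow_dvd_iff_le_factorization hp hyk).mpr (by omega))
    omega
  · intro h
    apply dvd_add
    · have h2 : p ^ (2 * m) ∣ y ^ 2 := by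
        rw [two_mul, pow_add, sq]
        exact mul_dvd_mul h h
      exact dvd_trans (pow_dvd_pow p (by omega)) h2
    · have h1 : p ^ (e - m) ∣ k :=
        dvd_trans (pow_dvd_pow p (by omega)) (Nat.ordProj_dvd k p)
      have : p ^ (e - m + m) ∣ k * y := by
        rw [pow_add]; exact mul_dvd_mul h1 h
      exact dvd_trans (pow_dvd_pow p (by omega)) this

/-- `ρ` at prime powers, `k = 0`. -/
lemma rhok_pp_zero (p e : ℕ) (hp : p.Prime) : rhok 0 (p ^ e) = p ^ (e / 2) := by
  unfold rhok
  have hfc : Finset.filter (fun y => p ^ e ∣ y ^ 2 + 0 * y) (Finset.Icc 1 (p ^ e))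
      = Finset.filter (fun y => p ^ (e - e / 2) ∣ y) (Finset.Icc 1 (p ^ e)) := by
    apply Finset.filter_congr
    intro y hy
    rw [Finset.mem_Icc] at hy
    exact cond_zero p e y hp (by omega)
  rw [hfc, count_dvd, Nat.pow_div (by omega) hp.pos]
  congr 1
  omega

/-- `ρ` at prime powers, `k ≥ 1`. -/
lemma rhok_pp (p e k : ℕ) (hp : p.Prime) (hk : 1 ≤ k) :
    rhok k (p ^ e) =
      if 2 * k.factorization p < e then 2 * p ^ (k.factorization p)
      else p ^ (e / 2) := by
  set a := k.factorization p with ha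
  unfold rhok
  by_cases hcase : 2 * a < e
  · rw [if_pos hcase]
    have hfc : Finset.filter (fun y => p ^ e ∣ y ^ 2 + k * y) (Finset.Icc 1 (p ^ e))
        = Finset.filter
            (fun y => p ^ (e - a) ∣ y ∨ p ^ (e - a) ∣ y + k) (Finset.Icc 1 (p ^ e)) := by
      apply Finset.filter_congr
      intro y hy
      rw [Finset.mem_Icc] at hy
      exact cond_small p e k y hp (by omega) hk hcase
    rw [hfc, Finset.filter_or]
    rw [Finset.card_union_of_disjoint]
    · have hd : p ^ (e - a) ∣ p ^ e := pow_dvd_pow p (by omega)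
      rw [count_dvd, count_dvd_shift _ _ _ (pow_pos hp.pos _) hd,
        Nat.pow_div (by omega) hp.pos]
      have : e - (e - a) = a := by omega
      rw [this]; ring
    · rw [Finset.disjoint_left]
      intro y hy1 hy2
      simp only [Finset.mem_filter] at hy1 hy2
      have hdk : p ^ (e - a) ∣ k := by
        have := Nat.dvd_sub hy2.2 hy1.2
        simpa using this
      have := (Nat.Prime.pow_dvd_iff_le_factorization hp (by omega)).mp hdk
      omega
  · rw [if_neg hcase]
    have hfc : Finset.filter (fun y => p ^ e ∣ y ^ 2 + k * y) (Finset.Icc 1 (p ^ e))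
        = Finset.filter (fun y => p ^ (e - e / 2) ∣ y) (Finset.Icc 1 (p ^ e)) := by
      apply Finset.filter_congr
      intro y hy
      rw [Finset.mem_Icc] at hy
      exact cond_big p e k y hp (by omega) hk (by omega)
    rw [hfc, count_dvd, Nat.pow_div (by omega) hp.pos]
    congr 1
    omega

/-- Transfer `rhok` to a count in `ZMod D`. -/
lemma rhok_eq_zmod (k D : ℕ) [NeZero D] :
    rhok k D = (Finset.univ.filter
      (fun y : ZMod D => y ^ 2 + (k : ZMod D) * y = 0)).card := by
  have hD : 0 < D := Nat.pos_of_ne_zero (NeZero.ne D)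
  unfold rhok
  have key : ∀ y : ℕ, (D ∣ y ^ 2 + k * y) ↔
      ((y : ZMod D) ^ 2 + (k : ZMod D) * (y : ZMod D) = 0) := by
    intro y
    rw [← ZMod.natCast_eq_zero_iff]
    push_cast
    rfl
  refine Finset.card_bij (fun y _ => (y : ZMod D)) ?_ ?_ ?_
  · intro y hy
    simp only [Finset.mem_filter, Finset.mem_Icc] at hy
    simp only [Finset.mem_filter, Finset.mem_univ, true_and]
    exact (key y).mp hy.2
  · intro y1 h1 y2 h2 h
    simp only [Finset.mem_filter, Finset.mem_Icc] at h1 h2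
    have := (ZMod.natCast_eq_natCast_iff y1 y2 D).mp h
    unfold Nat.ModEq at this
    rcases eq_or_lt_of_le h1.1.2 with h1e | h1l
    · rcases eq_or_lt_of_le h2.1.2 with h2e | h2l
      · omega
      · rw [Nat.mod_eq_of_lt h2l, h1e, Nat.mod_self] at this; omega
    · rcases eq_or_lt_of_le h2.1.2 with h2e | h2l
      · rw [Nat.mod_eq_of_lt h1l, h2e, Nat.mod_self] at this; omega
      · rw [Nat.mod_eq_of_lt h1l, Nat.mod_eq_of_lt h2l] at this; exact this
  · intro z hz
    simp only [Finset.mem_filter, Finset.mem_univ, true_and] at hz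
    by_cases hz0 : z.val = 0
    · refine ⟨D, ?_, ?_⟩
      · simp only [Finset.mem_filter, Finset.mem_Icc]
        refine ⟨⟨hD, le_refl D⟩, ?_⟩
        apply (key D).mpr
        have hzz : z = 0 := (ZMod.val_eq_zero z).mp hz0
        rw [ZMod.natCast_self]
        rw [hzz] at hz
        simpa using hz
      · show (D : ZMod D) = z
        rw [ZMod.natCast_self]
        exact ((ZMod.val_eq_zero z).mp hz0).symm
    · refine ⟨z.val, ?_, ZMod.natCast_rightInverse z⟩
      simp only [Finset.mem_filter, Finset.mem_Icc]
      refine ⟨⟨by omega, (z.val_lt).le⟩, ?_⟩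
      apply (key z.val).mpr
      rw [ZMod.natCast_rightInverse z]
      exact hz

/-- Multiplicativity of `rhok` in `D`. -/
lemma rhok_mul (k : ℕ) : ∀ m n : ℕ, m.Coprime n → rhok k (m * n) = rhok k m * rhok k n := by
  intro m n h
  rcases Nat.eq_zero_or_pos m with rfl | hm
  · have : n = 1 := by simpa [Nat.coprime_zero_left] using h
    subst this
    simp [rhok]
  rcases Nat.eq_zero_or_pos n with rfl | hn
  · have : m = 1 := by simpa [Nat.coprime_zero_right] using h
    subst this
    simp [rhok]
  haveI : NeZero m := ⟨hm.ne'⟩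
  haveI : NeZero n := ⟨hn.ne'⟩
  haveI : NeZero (m * n) := ⟨by positivity⟩
  rw [rhok_eq_zmod k (m * n), rhok_eq_zmod k m, rhok_eq_zmod k n]
  let e := ZMod.chineseRemainder h
  have step1 : (Finset.univ.filter
      (fun y : ZMod (m * n) => y ^ 2 + (k : ZMod (m * n)) * y = 0)).card
      = (Finset.univ.filter (fun z : ZMod m × ZMod n =>
          z.1 ^ 2 + (k : ZMod m) * z.1 = 0 ∧ z.2 ^ 2 + (k : ZMod n) * z.2 = 0)).card := by
    apply Finset.card_bij (fun y _ => e y)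
    · intro y hy
      simp only [Finset.mem_filter, Finset.mem_univ, true_and] at hy ⊢
      have h0 : e (y ^ 2 + (k : ZMod (m * n)) * y) = 0 := by rw [hy]; exact map_zero e
      rw [map_add, map_mul, map_pow, map_natCast] at h0
      rw [Prod.ext_iff] at h0
      simpa using h0
    · intro y1 _ y2 _ hxy
      exact e.injective hxy
    · intro z hz
      refine ⟨e.symm z, ?_, by simp⟩
      simp only [Finset.mem_filter, Finset.mem_univ, true_and] at hz ⊢
      have h0 : e ((e.symm z) ^ 2 + (k : ZMod (m * n)) * (e.symm z)) = 0 := by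
        rw [map_add, map_mul, map_pow, map_natCast, RingEquiv.apply_symm_apply]
        rw [Prod.ext_iff]
        simpa using hz
      have := congrArg e.symm h0
      rwa [RingEquiv.symm_apply_apply, map_zero] at this
  rw [step1]
  rw [← Finset.univ_product_univ,
    Finset.filter_product (fun y : ZMod m => y ^ 2 + (k : ZMod m) * y = 0)
      (fun y : ZMod n => y ^ 2 + (k : ZMod n) * y = 0),
    Finset.card_product]

/-- Proposition 2.16, the explicit value of `ρ_k(D)`. -/
theorem rhok_eq_prod (D : ℕ) (hD : 0 < D) :
    (rhok 0 D = ∏ p ∈ D.primeFactors, p ^ (D.factorization p / 2)) ∧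
    (∀ k : ℕ, 1 ≤ k →
      rhok k D = ∏ p ∈ D.primeFactors,
        if (k.factorization p : ℝ) < (D.factorization p : ℝ) / 2
        then 2 * p ^ (k.factorization p)
        else p ^ (D.factorization p / 2)) ∧
    (Squarefree D → rhok 0 D = 1) := by
  have hone : ∀ k : ℕ, rhok k 1 = 1 := by
    intro k
    simp [rhok]
  have hfact : ∀ k : ℕ, rhok k D = ∏ p ∈ D.primeFactors, rhok k (p ^ D.factorization p) := by
    intro k
    rw [Nat.multiplicative_factorization (rhok k) (rhok_mul k) (hone k) hD.ne']
    rw [Nat.prod_factorization_eq_prod_primeFactors]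
  have part1 : rhok 0 D = ∏ p ∈ D.primeFactors, p ^ (D.factorization p / 2) := by
    rw [hfact 0]
    apply Finset.prod_congr rfl
    intro p hp
    exact rhok_pp_zero p _ (Nat.prime_of_mem_primeFactors hp)
  refine ⟨part1, ?_, ?_⟩
  · intro k hk
    rw [hfact k]
    apply Finset.prod_congr rfl
    intro p hp
    rw [rhok_pp p _ k (Nat.prime_of_mem_primeFactors hp) hk]
    have hiff : (2 * k.factorization p < D.factorization p) ↔
        ((k.factorization p : ℝ) < (D.factorization p : ℝ) / 2) := by
      rw [lt_div_iff₀ (by norm_num : (0:ℝ) < 2)]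
      constructor
      · intro h
        have : ((2 * k.factorization p : ℕ) : ℝ) < ((D.factorization p : ℕ) : ℝ) := by
          exact_mod_cast Nat.cast_lt.mpr h
        push_cast at this
        linarith
      · intro h
        have : ((2 * k.factorization p : ℕ) : ℝ) < ((D.factorization p : ℕ) : ℝ) := by
          push_cast
          linarith
        exact_mod_cast this
    by_cases hc : 2 * k.factorization p < D.factorization p
    · rw [if_pos hc, if_pos (hiff.mp hc)]
    · rw [if_neg hc, if_neg (fun hh => hc (hiff.mpr hh))]
  · intro hsq
    rw [part1]
    apply Finset.prod_eq_one
    intro p hp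
    have : D.factorization p = 1 :=
      (Nat.squarefree_iff_factorization_le_one hD.ne').mp hsq p |>.antisymm
        (Nat.Prime.factorization_pos_of_dvd (Nat.prime_of_mem_primeFactors hp) hD.ne'
          (Nat.dvd_of_mem_primeFactors hp))
    rw [this]
    norm_num
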